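/- Let (G,H) be a CSS pair with adapted dual H*, let K ≥ 0 and 0 ≤ p ≤ 1, and set C = e^{−2K}(1−p) + e^{2K}p. Then the disorder-averaged homological difference is bounded by a sum over nontrivial codewords: [ΔF_e(G,H;K)]_p ≤ Σ_{c ∈ F₂ⁿ : H cᵀ = 0 and c ∉ rowspace(G)} C^{|c|}. -/

import Mathlib

open Matrix Filter

/-- Partition function `Z_e(G;K)` of the random-bond Ising model in Wegner's form. -/
noncomputable def Zf {ρ : Type*} [Fintype ρ] [DecidableEq ρ] {n : ℕ}
    (G : Matrix ρ (Fin n) (ZMod 2)) (e : Fin n → ZMod 2) (K : ℝ) : ℝ :=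
  ∑ α : ρ → ZMod 2,
    Real.exp (K * ∑ b : Fin n, (-1 : ℝ) ^ ((e b).val + ((Matrix.vecMul α G) b).val))

/-- `Hs` is an adapted dual of `H`: it stacks `G` on top of `k` extra rows, and its
row space equals `C_H^⊥ = {c | H cᵀ = 0}`. -/
def IsAdaptedDual {rG rH k n : ℕ} (G : Matrix (Fin rG) (Fin n) (ZMod 2))
    (H : Matrix (Fin rH) (Fin n) (ZMod 2))
    (Hs : Matrix (Fin rG ⊕ Fin k) (Fin n) (ZMod 2)) : Prop :=
  (∀ i, Hs (Sum.inl i) = G i) ∧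
  LinearMap.range Hs.vecMulLinear = LinearMap.ker H.mulVecLin

/-- Homological difference `ΔF_e(G,H;K) = ln Z_e(H*;K) − ln Z_e(G;K)`. -/
noncomputable def deltaF {ρ ρ' : Type*} [Fintype ρ] [DecidableEq ρ] [Fintype ρ'] [DecidableEq ρ'] {n : ℕ}
    (G : Matrix ρ (Fin n) (ZMod 2)) (Hs : Matrix ρ' (Fin n) (ZMod 2))
    (e : Fin n → ZMod 2) (K : ℝ) : ℝ :=
  Real.log (Zf Hs e K) - Real.log (Zf G e K)

/-- Disorder average `[X_e]_p = Σ_e p^{|e|}(1−p)^{n−|e|} X_e`. -/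
noncomputable def davg {n : ℕ} (p : ℝ) (X : (Fin n → ZMod 2) → ℝ) : ℝ :=
  ∑ e : Fin n → ZMod 2, p ^ hammingNorm e * (1 - p) ^ (n - hammingNorm e) * X e

/-- Average success probability of maximum-likelihood decoding. -/
noncomputable def Psucc {ρ ρ' : Type*} [Fintype ρ] [DecidableEq ρ] [Fintype ρ'] [DecidableEq ρ'] {n : ℕ}
    (G : Matrix ρ (Fin n) (ZMod 2)) (Hs : Matrix ρ' (Fin n) (ZMod 2))
    (K p : ℝ) : ℝ :=
  davg p (fun e => Zf G e K / Zf Hs e K)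

/-- CSS distance `d_G`: minimum Hamming weight of a vector `c` with `H cᵀ = 0`
that is not in the row space of `G`. -/
noncomputable def dCSS {rG rH n : ℕ} (G : Matrix (Fin rG) (Fin n) (ZMod 2))
    (H : Matrix (Fin rH) (Fin n) (ZMod 2)) : ℕ :=
  sInf {w | ∃ c : Fin n → ZMod 2,
    H.mulVec c = 0 ∧ (¬ ∃ α, Matrix.vecMul α G = c) ∧ hammingNorm c = w}


open Matrix Filter Finset Module LinearMap

private lemma zmod2_cases : ∀ x : ZMod 2, x = 0 ∨ x = 1 := by decide

private lemma neg_one_pow_mod2 (m : ℕ) : ((-1 : ℝ)) ^ (m % 2) = (-1) ^ m := by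
  conv_rhs => rw [← Nat.div_add_mod m 2]
  rw [pow_add, pow_mul, neg_one_sq, one_pow, one_mul]

private lemma neg_one_pow_val_add (x y : ZMod 2) :
    ((-1 : ℝ)) ^ ((x + y).val) = (-1) ^ x.val * (-1) ^ y.val := by
  rw [ZMod.val_add, neg_one_pow_mod2, pow_add]

noncomputable def wtf {n : ℕ} (K : ℝ) (v : Fin n → ZMod 2) : ℝ :=
  ∏ b, Real.exp (K * (-1) ^ ((v b).val))

noncomputable def phif {n : ℕ} (K : ℝ) (c e : Fin n → ZMod 2) : ℝ :=
  ∏ b, if c b = 1 then Real.exp (-(2 * K) * (-1) ^ ((e b).val)) else 1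

private lemma wtf_pos {n : ℕ} (K : ℝ) (v : Fin n → ZMod 2) : 0 < wtf K v :=
  Finset.prod_pos fun _ _ => Real.exp_pos _

private lemma phif_nonneg {n : ℕ} (K : ℝ) (c e : Fin n → ZMod 2) : 0 ≤ phif K c e :=
  Finset.prod_nonneg fun b _ => by split <;> positivity

private lemma Zf_eq_sum_wtf {ρ : Type*} [Fintype ρ] [DecidableEq ρ] {n : ℕ}
    (M : Matrix ρ (Fin n) (ZMod 2)) (e : Fin n → ZMod 2) (K : ℝ) :
    Zf M e K = ∑ α : ρ → ZMod 2, wtf K (e + Matrix.vecMul α M) := by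
  unfold Zf wtf
  refine Finset.sum_congr rfl fun α _ => ?_
  rw [Finset.mul_sum, Real.exp_sum]
  refine Finset.prod_congr rfl fun b _ => ?_
  congr 2
  rw [pow_add, Pi.add_apply, neg_one_pow_val_add]

private lemma wtf_add_eq {n : ℕ} (K : ℝ) (e c : Fin n → ZMod 2) :
    wtf K (e + c) = wtf K e * phif K c e := by
  unfold wtf phif
  rw [← Finset.prod_mul_distrib]
  refine Finset.prod_congr rfl fun b _ => ?_
  rw [Pi.add_apply, neg_one_pow_val_add]
  rcases zmod2_cases (c b) with h | h <;> rw [h]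
  · norm_num [show (0 : ZMod 2).val = 0 from rfl, show (0 : ZMod 2) ≠ 1 by decide]
  · rw [if_pos rfl, ← Real.exp_add]
    congr 1
    rw [show (1 : ZMod 2).val = 1 from rfl]
    ring

private lemma hammingNorm_eq_card {n : ℕ} (c : Fin n → ZMod 2) :
    hammingNorm c = (Finset.univ.filter fun b => c b = 1).card := by
  unfold hammingNorm
  congr 1
  refine Finset.filter_congr fun b _ => ?_
  rcases zmod2_cases (c b) with h | h <;> simp [h]

private lemma weight_prod {n : ℕ} (p : ℝ) (e : Fin n → ZMod 2) :
    p ^ hammingNorm e * (1 - p) ^ (n - hammingNorm e) =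
      ∏ b, (if e b = 1 then p else 1 - p) := by
  rw [Finset.prod_ite, Finset.prod_const, Finset.prod_const]
  have h1 := Finset.card_filter_add_card_filter_not
    (s := (Finset.univ : Finset (Fin n))) (p := fun b => e b = 1)
  rw [Finset.card_univ, Fintype.card_fin] at h1
  rw [hammingNorm_eq_card]
  congr 2
  omega

private lemma davg_phif {n : ℕ} (K p : ℝ) (c : Fin n → ZMod 2) :
    davg p (phif K c) =
      (Real.exp (-(2 * K)) * (1 - p) + Real.exp (2 * K) * p) ^ hammingNorm c := by
  unfold davg
  have step1 : ∀ e : Fin n → ZMod 2,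
      p ^ hammingNorm e * (1 - p) ^ (n - hammingNorm e) * phif K c e =
      ∏ b, ((if e b = 1 then p else 1 - p) *
        (if c b = 1 then Real.exp (-(2 * K) * (-1) ^ ((e b).val)) else 1)) := by
    intro e
    rw [weight_prod, Finset.prod_mul_distrib]
    rfl
  simp_rw [step1]
  have key := Finset.prod_univ_sum (κ := fun _ : Fin n => ZMod 2) (fun _ => Finset.univ)
    (fun b x => (if x = 1 then p else 1 - p) *
      (if c b = 1 then Real.exp (-(2 * K) * (-1) ^ (x.val)) else 1))
  rw [Fintype.piFinset_univ] at key
  rw [← key]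
  have step2 : ∀ b : Fin n,
      (∑ x : ZMod 2, (if x = 1 then p else 1 - p) *
        (if c b = 1 then Real.exp (-(2 * K) * (-1) ^ (x.val)) else 1)) =
      (if c b = 1 then Real.exp (-(2 * K)) * (1 - p) + Real.exp (2 * K) * p else 1) := by
    intro b
    rw [show (Finset.univ : Finset (ZMod 2)) = {0, 1} by decide,
      Finset.sum_insert (by decide), Finset.sum_singleton]
    by_cases h : c b = 1
    · simp only [h, if_true, show ((0 : ZMod 2) = 1) = False by simp,
        show (0 : ZMod 2).val = 0 from rfl, show (1 : ZMod 2).val = 1 from rfl,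
        pow_zero, pow_one, mul_one, mul_neg_one, if_false, ite_true, ite_false, neg_neg]
      ring
    · simp only [h, if_false, ite_false, mul_one]
      have : ((0 : ZMod 2) = 1) = False := by simp
      simp only [this, if_true, if_false, ite_true, ite_false]
      ring
  simp_rw [step2]
  rw [Finset.prod_ite, Finset.prod_const, Finset.prod_const, one_pow, mul_one,
    hammingNorm_eq_card]

/-- The disorder-averaged homological difference is bounded by a sum over nontrivial
codewords of `C^{|c|}` with `C = e^{−2K}(1−p) + e^{2K}p`. -/
theorem stmt10 {rG rH k n : ℕ} (G : Matrix (Fin rG) (Fin n) (ZMod 2))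
    (H : Matrix (Fin rH) (Fin n) (ZMod 2)) (hGH : G * Hᵀ = 0)
    (hk : k = n - G.rank - H.rank)
    (Hs : Matrix (Fin rG ⊕ Fin k) (Fin n) (ZMod 2))
    (hHs : IsAdaptedDual G H Hs)
    (K p : ℝ) (hK : 0 ≤ K) (hp0 : 0 ≤ p) (hp1 : p ≤ 1)
    (C : ℝ) (hC : C = Real.exp (-(2 * K)) * (1 - p) + Real.exp (2 * K) * p) :
    davg p (fun e => deltaF G Hs e K) ≤
      ∑ c : Fin n → ZMod 2,
        if H.mulVec c = 0 ∧ ¬ (∃ α, Matrix.vecMul α G = c) then C ^ hammingNorm c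
        else 0 := by
    classical
  -- the extra rows of `Hs`
  set L : Matrix (Fin k) (Fin n) (ZMod 2) := Matrix.of fun i => Hs (Sum.inr i) with hL
  have hsplit : ∀ (a : Fin rG → ZMod 2) (b : Fin k → ZMod 2),
      Matrix.vecMul (Sum.elim a b) Hs = Matrix.vecMul a G + Matrix.vecMul b L := by
    intro a b
    funext x
    simp [Matrix.vecMul, dotProduct, Fintype.sum_sum_type, hHs.1, hL]
  -- row space of G is inside the code of H
  have hGsub : LinearMap.range G.vecMulLinear ≤ LinearMap.ker H.mulVecLin := by
    rintro x ⟨a, rfl⟩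
    simp only [LinearMap.mem_ker, Matrix.vecMulLinear_apply, Matrix.mulVecLin_apply]
    rw [← Matrix.vecMul_transpose, Matrix.vecMul_vecMul, hGH, Matrix.vecMul_zero]
  have hfinV : Module.finrank (ZMod 2) (Fin n → ZMod 2) = n := by
    rw [Module.finrank_pi, Fintype.card_fin]
  have hfinK : Module.finrank (ZMod 2) (Fin k → ZMod 2) = k := by
    rw [Module.finrank_pi, Fintype.card_fin]
  have hHrank : H.rank + Module.finrank (ZMod 2) (LinearMap.ker H.mulVecLin) = n := by
    rw [Matrix.rank, LinearMap.finrank_range_add_finrank_ker, hfinV]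
  have hGrow : Module.finrank (ZMod 2) (LinearMap.range G.vecMulLinear) = G.rank := by
    have hGt : G.vecMulLinear = Gᵀ.mulVecLin := by
      apply LinearMap.ext
      intro v
      simp [Matrix.mulVec_transpose]
    rw [hGt, ← Matrix.rank_transpose G]
    rfl
  have hGleN : G.rank ≤ Module.finrank (ZMod 2) (LinearMap.ker H.mulVecLin) := by
    rw [← hGrow]
    exact Submodule.finrank_mono hGsub
  have hsup : LinearMap.range Hs.vecMulLinear =
      LinearMap.range G.vecMulLinear ⊔ LinearMap.range L.vecMulLinear := by
    apply le_antisymm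
    · rintro x ⟨α, rfl⟩
      have hα2 := hsplit (α ∘ Sum.inl) (α ∘ Sum.inr)
      rw [Sum.elim_comp_inl_inr] at hα2
      rw [Matrix.vecMulLinear_apply, hα2]
      exact Submodule.add_mem_sup ⟨α ∘ Sum.inl, rfl⟩ ⟨α ∘ Sum.inr, rfl⟩
    · apply sup_le
      · rintro x ⟨a, rfl⟩
        exact ⟨Sum.elim a 0, by
          rw [Matrix.vecMulLinear_apply, hsplit, Matrix.zero_vecMul, add_zero]; rfl⟩
      · rintro x ⟨b, rfl⟩
        exact ⟨Sum.elim 0 b, by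
          rw [Matrix.vecMulLinear_apply, hsplit, Matrix.zero_vecMul, zero_add]; rfl⟩
  have hUK : Module.finrank (ZMod 2)
      ↥(LinearMap.range G.vecMulLinear ⊔ LinearMap.range L.vecMulLinear) =
      Module.finrank (ZMod 2) (LinearMap.ker H.mulVecLin) := by
    rw [← hsup, hHs.2]
  have hrlLe : Module.finrank (ZMod 2) (LinearMap.range L.vecMulLinear) ≤ k :=
    (LinearMap.finrank_range_le _).trans_eq hfinK
  have hsupinf := Submodule.finrank_sup_add_finrank_inf_eq
    (LinearMap.range G.vecMulLinear) (LinearMap.range L.vecMulLinear)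
  have hnum : Module.finrank (ZMod 2)
        ↥(LinearMap.range G.vecMulLinear ⊓ LinearMap.range L.vecMulLinear) = 0 ∧
      Module.finrank (ZMod 2) (LinearMap.range L.vecMulLinear) = k := by
    rw [hGrow] at hsupinf
    rw [hUK] at hsupinf
    omega
  have hinf_bot : LinearMap.range G.vecMulLinear ⊓ LinearMap.range L.vecMulLinear = ⊥ :=
    Submodule.finrank_eq_zero.mp hnum.1
  have hLinj : ∀ b : Fin k → ZMod 2, Matrix.vecMul b L = 0 → b = 0 := by
    have hker : LinearMap.ker L.vecMulLinear = ⊥ := by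
      have := LinearMap.finrank_range_add_finrank_ker L.vecMulLinear
      rw [hfinK, hnum.2] at this
      exact Submodule.finrank_eq_zero.mp (by omega)
    intro b hb
    have : b ∈ LinearMap.ker L.vecMulLinear := by
      rw [LinearMap.mem_ker, Matrix.vecMulLinear_apply]
      exact hb
    rwa [hker, Submodule.mem_bot] at this
  have hb0 : ∀ (a : Fin rG → ZMod 2) (b : Fin k → ZMod 2),
      Matrix.vecMul a G + Matrix.vecMul b L = 0 → b = 0 ∧ Matrix.vecMul a G = 0 := by
    intro a b hab
    have hmem : Matrix.vecMul b L ∈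
        LinearMap.range G.vecMulLinear ⊓ LinearMap.range L.vecMulLinear := by
      refine Submodule.mem_inf.mpr ⟨⟨-a, ?_⟩, ⟨b, rfl⟩⟩
      rw [Matrix.vecMulLinear_apply, Matrix.neg_vecMul]
      exact (eq_neg_of_add_eq_zero_right hab).symm
    rw [hinf_bot, Submodule.mem_bot] at hmem
    have hb := hLinj b hmem
    refine ⟨hb, ?_⟩
    rw [hmem, add_zero] at hab
    exact hab
  -- the set of nontrivial codewords obtained from `Hs`
  set Φ : (Fin rG → ZMod 2) × (Fin k → ZMod 2) → (Fin n → ZMod 2) :=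
    fun ab => Matrix.vecMul ab.1 G + Matrix.vecMul ab.2 L with hΦ
  set S : Finset ((Fin rG → ZMod 2) × (Fin k → ZMod 2)) :=
    Finset.univ ×ˢ (Finset.univ.erase 0) with hS
  set T : Finset (Fin n → ZMod 2) := S.image Φ with hT
  have hmemS : ∀ ab, ab ∈ S ↔ ab.2 ≠ 0 := by
    intro ab
    simp [hS, Finset.mem_product]
  have hΦapp : ∀ ab : (Fin rG → ZMod 2) × (Fin k → ZMod 2),
      Φ ab = Matrix.vecMul ab.1 G + Matrix.vecMul ab.2 L := fun ab => rfl
  set mG : ℕ := (Finset.univ.filter fun a : Fin rG → ZMod 2 => Matrix.vecMul a G = 0).card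
    with hmG
  -- every fiber of Φ over T has cardinality mG
  have hcard : ∀ t ∈ T, (S.filter fun ab => Φ ab = t).card = mG := by
    intro t ht
    obtain ⟨ab0, hab0S, hab0⟩ := Finset.mem_image.mp ht
    have hb0ne : ab0.2 ≠ 0 := (hmemS ab0).mp hab0S
    rw [hmG]
    refine Finset.card_nbij' (fun ab => ab.1 - ab0.1) (fun a => (a + ab0.1, ab0.2))
      ?_ ?_ ?_ ?_
    · intro ab hab
      rw [Finset.mem_coe, Finset.mem_filter] at hab
      have heq : Matrix.vecMul (ab.1 - ab0.1) G + Matrix.vecMul (ab.2 - ab0.2) L = 0 := by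
        rw [Matrix.sub_vecMul, Matrix.sub_vecMul]
        have h5 := hab.2.trans hab0.symm
        rw [hΦapp, hΦapp] at h5
        rw [sub_add_sub_comm, h5, sub_self]
      simp only [Finset.mem_coe, Finset.mem_filter, Finset.mem_univ, true_and]
      exact (hb0 _ _ heq).2
    · intro a ha
      rw [Finset.mem_coe, Finset.mem_filter] at ha
      rw [Finset.mem_coe, Finset.mem_filter]
      refine ⟨(hmemS _).mpr hb0ne, ?_⟩
      rw [hΦapp]
      simp only
      rw [Matrix.add_vecMul, ha.2, zero_add]
      rw [← hΦapp ab0, hab0]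
    · intro ab hab
      rw [Finset.mem_coe, Finset.mem_filter] at hab
      have heq : Matrix.vecMul (ab.1 - ab0.1) G + Matrix.vecMul (ab.2 - ab0.2) L = 0 := by
        rw [Matrix.sub_vecMul, Matrix.sub_vecMul]
        have h5 := hab.2.trans hab0.symm
        rw [hΦapp, hΦapp] at h5
        rw [sub_add_sub_comm, h5, sub_self]
      have h2 := (hb0 _ _ heq).1
      have h2' : ab.2 = ab0.2 := by
        have := sub_eq_zero.mp h2
        exact this
      ext <;> simp [h2']
    · intro a ha
      simp
  -- every element of T is a nontrivial codeword
  have hTcode : ∀ t ∈ T, H.mulVec t = 0 ∧ ¬ ∃ α, Matrix.vecMul α G = t := by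
    intro t ht
    obtain ⟨ab, habS, hab⟩ := Finset.mem_image.mp ht
    have hbne : ab.2 ≠ 0 := (hmemS ab).mp habS
    constructor
    · have : t ∈ LinearMap.range Hs.vecMulLinear := by
        refine ⟨Sum.elim ab.1 ab.2, ?_⟩
        rw [Matrix.vecMulLinear_apply, hsplit, ← hab]
      rw [hHs.2, LinearMap.mem_ker, Matrix.mulVecLin_apply] at this
      exact this
    · rintro ⟨α, hα⟩
      have heq : Matrix.vecMul (α - ab.1) G + Matrix.vecMul (-ab.2) L = 0 := by
        rw [Matrix.sub_vecMul, Matrix.neg_vecMul]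
        have : Matrix.vecMul α G = Matrix.vecMul ab.1 G + Matrix.vecMul ab.2 L := by
          rw [hα, ← hab]
        rw [this]
        abel
      have := (hb0 _ _ heq).1
      exact hbne (by simpa using this.symm)
  -- pointwise bound on the homological difference
  have hpoint : ∀ e : Fin n → ZMod 2, deltaF G Hs e K ≤ ∑ t ∈ T, phif K t e := by
    intro e
    have hZG_pos : 0 < Zf G e K := by
      rw [Zf_eq_sum_wtf]
      exact Finset.sum_pos (fun a _ => wtf_pos K _) Finset.univ_nonempty
    have hZHs_pos : 0 < Zf Hs e K := by
      rw [Zf_eq_sum_wtf]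
      exact Finset.sum_pos (fun a _ => wtf_pos K _) Finset.univ_nonempty
    -- decomposition of the partition function of Hs
    have hZHs : Zf Hs e K = Zf G e K + ∑ ab ∈ S, wtf K (e + Φ ab) := by
      rw [Zf_eq_sum_wtf, Zf_eq_sum_wtf]
      have hq := Equiv.sum_comp (Equiv.sumArrowEquivProdArrow (Fin rG) (Fin k) (ZMod 2)).symm
        (fun α => wtf K (e + Matrix.vecMul α Hs))
      rw [← hq]
      have hterm : ∀ ab : (Fin rG → ZMod 2) × (Fin k → ZMod 2),
          wtf K (e + Matrix.vecMul
            ((Equiv.sumArrowEquivProdArrow (Fin rG) (Fin k) (ZMod 2)).symm ab) Hs) =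
          wtf K (e + (Matrix.vecMul ab.1 G + Matrix.vecMul ab.2 L)) := by
        intro ab
        congr 2
        have : ((Equiv.sumArrowEquivProdArrow (Fin rG) (Fin k) (ZMod 2)).symm ab) =
            Sum.elim ab.1 ab.2 := rfl
        rw [this, hsplit]
      rw [Finset.sum_congr rfl fun ab _ => hterm ab]
      rw [Fintype.sum_prod_type]
      have hinner : ∀ a : Fin rG → ZMod 2,
          (∑ b : Fin k → ZMod 2, wtf K (e + (Matrix.vecMul a G + Matrix.vecMul b L))) =
          wtf K (e + Matrix.vecMul a G) +
            ∑ b ∈ Finset.univ.erase 0, wtf K (e + (Matrix.vecMul a G + Matrix.vecMul b L)) := by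
        intro a
        rw [← Finset.add_sum_erase _ _ (Finset.mem_univ (0 : Fin k → ZMod 2))]
        rw [Matrix.zero_vecMul, add_zero]
      rw [Finset.sum_congr rfl fun a _ => hinner a, Finset.sum_add_distrib]
      congr 1
      rw [hS, Finset.sum_product]
  -- cont'd below
    have hZdiff : Zf Hs e K - Zf G e K = (mG : ℝ) * wtf K e * ∑ t ∈ T, phif K t e := by
      rw [hZHs, add_sub_cancel_left]
      have h1 : ∑ ab ∈ S, wtf K (e + Φ ab) = ∑ t ∈ T, (S.filter fun ab => Φ ab = t).card
          • wtf K (e + t) := by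
        rw [hT]
        exact Finset.sum_comp (fun t => wtf K (e + t)) Φ
      rw [h1, Finset.sum_congr rfl fun t ht => by rw [hcard t ht]]
      rw [Finset.mul_sum]
      refine Finset.sum_congr rfl fun t ht => ?_
      rw [wtf_add_eq, nsmul_eq_mul]
      ring
    have hlow : (mG : ℝ) * wtf K e ≤ Zf G e K := by
      rw [Zf_eq_sum_wtf]
      have h1 : (mG : ℝ) * wtf K e =
          ∑ a ∈ Finset.univ.filter (fun a : Fin rG → ZMod 2 => Matrix.vecMul a G = 0),
            wtf K (e + Matrix.vecMul a G) := by
        rw [Finset.sum_congr rfl fun a ha => by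
          rw [(Finset.mem_filter.mp ha).2, add_zero]]
        rw [Finset.sum_const, nsmul_eq_mul, hmG]
      rw [h1]
      exact Finset.sum_le_sum_of_subset_of_nonneg (Finset.filter_subset _ _)
        fun a _ _ => (wtf_pos K _).le
    have hphisum : (0 : ℝ) ≤ ∑ t ∈ T, phif K t e :=
      Finset.sum_nonneg fun t _ => phif_nonneg K t e
    have h2 : Real.log (Zf Hs e K / Zf G e K) ≤ Zf Hs e K / Zf G e K - 1 :=
      Real.log_le_sub_one_of_pos (div_pos hZHs_pos hZG_pos)
    have h3 : Zf Hs e K / Zf G e K - 1 ≤ ∑ t ∈ T, phif K t e := by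
      rw [div_sub_one hZG_pos.ne']
      rw [div_le_iff₀ hZG_pos]
      rw [hZdiff]
      calc (mG : ℝ) * wtf K e * ∑ t ∈ T, phif K t e
          = (∑ t ∈ T, phif K t e) * ((mG : ℝ) * wtf K e) := by ring
        _ ≤ (∑ t ∈ T, phif K t e) * Zf G e K :=
            mul_le_mul_of_nonneg_left hlow hphisum
    have h4 : deltaF G Hs e K = Real.log (Zf Hs e K / Zf G e K) := by
      rw [deltaF, Real.log_div hZHs_pos.ne' hZG_pos.ne']
    rw [h4]
    linarith
  -- average, using monotonicity of davg
  have hCpos : 0 ≤ C := by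
    rw [hC]
    have : (0:ℝ) ≤ 1 - p := by linarith
    positivity
  have havg : davg p (fun e => deltaF G Hs e K) ≤ davg p (fun e => ∑ t ∈ T, phif K t e) := by
    unfold davg
    refine Finset.sum_le_sum fun e _ => ?_
    have hw : (0:ℝ) ≤ p ^ hammingNorm e * (1 - p) ^ (n - hammingNorm e) :=
      mul_nonneg (pow_nonneg hp0 _) (pow_nonneg (by linarith) _)
    exact mul_le_mul_of_nonneg_left (hpoint e) hw
  have hswap : davg p (fun e => ∑ t ∈ T, phif K t e) = ∑ t ∈ T, davg p (phif K t) := by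
    unfold davg
    simp_rw [Finset.mul_sum]
    rw [Finset.sum_comm]
  have hphi : ∑ t ∈ T, davg p (phif K t) = ∑ t ∈ T, C ^ hammingNorm t := by
    refine Finset.sum_congr rfl fun t _ => ?_
    rw [davg_phif, hC]
  have hfinal : ∑ t ∈ T, C ^ hammingNorm t ≤
      ∑ c : Fin n → ZMod 2,
        if H.mulVec c = 0 ∧ ¬ (∃ α, Matrix.vecMul α G = c) then C ^ hammingNorm c else 0 := by
    have h1 : ∑ t ∈ T, C ^ hammingNorm t = ∑ t ∈ T,
        (if H.mulVec t = 0 ∧ ¬ (∃ α, Matrix.vecMul α G = t) then C ^ hammingNorm t else 0) :=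
      Finset.sum_congr rfl fun t ht => (if_pos (hTcode t ht)).symm
    rw [h1]
    refine Finset.sum_le_sum_of_subset_of_nonneg (Finset.subset_univ T) fun c _ _ => ?_
    split
    · exact pow_nonneg hCpos _
    · exact le_refl 0
  calc davg p (fun e => deltaF G Hs e K) ≤ davg p (fun e => ∑ t ∈ T, phif K t e) := havg
    _ = ∑ t ∈ T, davg p (phif K t) := hswap
    _ = ∑ t ∈ T, C ^ hammingNorm t := hphi
    _ ≤ _ := hfinal
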